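/- Dissipativity estimate for the two-dimensional operator with transmission conditions: for every (u₋, u₊) ∈ D(𝒜) and every λ > 0, one has ‖λ u − 𝒜 u‖ ≥ λ ‖u‖, where ‖·‖ denotes the supremum norm over both pieces, i.e. ‖v‖ = max( sup_{[r,1]×ℝ} |v₋|, sup_{[1,R]×ℝ} |v₊| ). -/

import Mathlib

open Set Filter Topology

/-- Partial derivative in the radial variable (one-sided on `[a,b]`). -/
noncomputable def pdR (a b : ℝ) (u : ℝ → ℝ → ℝ) (ρ φ : ℝ) : ℝ :=
  derivWithin (fun s => u s φ) (Set.Icc a b) ρ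

/-- Second partial derivative in the radial variable (one-sided on `[a,b]`). -/
noncomputable def pdRR (a b : ℝ) (u : ℝ → ℝ → ℝ) (ρ φ : ℝ) : ℝ :=
  derivWithin (fun s => pdR a b u s φ) (Set.Icc a b) ρ

/-- Second partial derivative in the angular variable. -/
noncomputable def pdPP (u : ℝ → ℝ → ℝ) (ρ φ : ℝ) : ℝ :=
  deriv (deriv (u ρ)) φ

/-- At a max over `Icc a b` attained at `x < b`, the one-sided derivative is `≤ 0`. -/
lemma derivWithin_nonpos_of_isMaxOn {a b x : ℝ} {f : ℝ → ℝ}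
    (hx : x ∈ Icc a b) (hxb : x < b)
    (hd : DifferentiableWithinAt ℝ f (Icc a b) x)
    (hmax : ∀ y ∈ Icc a b, f y ≤ f x) :
    derivWithin f (Icc a b) x ≤ 0 := by
  have h := hd.hasDerivWithinAt
  rw [hasDerivWithinAt_iff_tendsto_slope] at h
  have hsub : Ioo x b ⊆ Icc a b \ {x} := by
    intro y hy
    exact ⟨⟨le_trans hx.1 hy.1.le, hy.2.le⟩, ne_of_gt hy.1⟩
  have h2 : Tendsto (slope f x) (𝓝[Ioo x b] x) (𝓝 (derivWithin f (Icc a b) x)) :=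
    h.mono_left (nhdsWithin_mono _ hsub)
  have hne : (𝓝[Ioo x b] x).NeBot := by
    rw [nhdsWithin_Ioo_eq_nhdsGT hxb]
    infer_instance
  refine le_of_tendsto h2 ?_
  filter_upwards [self_mem_nhdsWithin] with y hy
  have h1 : f y - f x ≤ 0 := sub_nonpos.2 (hmax y ⟨le_trans hx.1 hy.1.le, hy.2.le⟩)
  have h2 : 0 < y - x := sub_pos.2 hy.1
  rw [slope_def_field]
  exact div_nonpos_of_nonpos_of_nonneg h1 h2.le

/-- At a max over `Icc a b` attained at `x > a`, the one-sided derivative is `≥ 0`. -/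
lemma derivWithin_nonneg_of_isMaxOn {a b x : ℝ} {f : ℝ → ℝ}
    (hx : x ∈ Icc a b) (hax : a < x)
    (hd : DifferentiableWithinAt ℝ f (Icc a b) x)
    (hmax : ∀ y ∈ Icc a b, f y ≤ f x) :
    0 ≤ derivWithin f (Icc a b) x := by
  have h := hd.hasDerivWithinAt
  rw [hasDerivWithinAt_iff_tendsto_slope] at h
  have hsub : Ioo a x ⊆ Icc a b \ {x} := by
    intro y hy
    exact ⟨⟨hy.1.le, le_trans hy.2.le hx.2⟩, ne_of_lt hy.2⟩
  have h2 : Tendsto (slope f x) (𝓝[Ioo a x] x) (𝓝 (derivWithin f (Icc a b) x)) :=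
    h.mono_left (nhdsWithin_mono _ hsub)
  have hne : (𝓝[Ioo a x] x).NeBot := by
    rw [nhdsWithin_Ioo_eq_nhdsLT hax]
    infer_instance
  refine ge_of_tendsto h2 ?_
  filter_upwards [self_mem_nhdsWithin] with y hy
  have h1 : f y - f x ≤ 0 := sub_nonpos.2 (hmax y ⟨hy.1.le, le_trans hy.2.le hx.2⟩)
  have h2 : y - x < 0 := sub_neg.2 hy.2
  rw [slope_def_field]
  exact div_nonneg_of_nonpos h1 h2.le

/-- Second-derivative test at a max with vanishing one-sided derivative. -/
lemma derivWithin2_nonpos_of_isMaxOn {a b x : ℝ} {f : ℝ → ℝ} (hab : a < b)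
    (hf : ContDiffOn ℝ 2 f (Icc a b)) (hx : x ∈ Icc a b)
    (hmax : ∀ y ∈ Icc a b, f y ≤ f x)
    (hd0 : derivWithin f (Icc a b) x = 0) :
    derivWithin (derivWithin f (Icc a b)) (Icc a b) x ≤ 0 := by
  set s := Icc a b with hs
  set g := derivWithin f s with hg
  by_contra hcpos
  push_neg at hcpos
  set c := derivWithin g s x with hc
  have hus : UniqueDiffOn ℝ s := uniqueDiffOn_Icc hab
  have hg1 : ContDiffOn ℝ 1 g s := hf.derivWithin hus (by norm_num)
  have hgd : DifferentiableWithinAt ℝ g s x := (hg1.differentiableOn one_ne_zero) x hx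
  have h := hgd.hasDerivWithinAt
  rw [hasDerivWithinAt_iff_tendsto_slope] at h
  have hev : ∀ᶠ y in 𝓝[s \ {x}] x, c / 2 < slope g x y :=
    h.eventually (eventually_gt_nhds (by linarith))
  rw [Filter.Eventually, Metric.mem_nhdsWithin_iff] at hev
  obtain ⟨ε, hε, hball⟩ := hev
  have hfd : DifferentiableOn ℝ f s := hf.differentiableOn (by norm_num)
  have key : ∀ y, y ∈ s → y ≠ x → |y - x| < ε → c / 2 < g y / (y - x) := by
    intro y hy hyx hdist
    have h5 := hball (Set.mem_inter (by simpa [Real.dist_eq] using hdist) ⟨hy, hyx⟩)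
    simp only [Set.mem_setOf_eq, slope_def_field] at h5
    rwa [hd0, sub_zero] at h5
  rcases lt_or_eq_of_le hx.2 with hxb | hxb
  · -- x < b : f increasing to the right
    set δ := min (ε / 2) (b - x) with hδ
    have hδ0 : 0 < δ := lt_min (by linarith) (by linarith)
    have hzb : x + δ ≤ b := by
      have := min_le_right (ε / 2) (b - x); simp only [hδ]; linarith
    have hmono : StrictMonoOn f (Icc x (x + δ)) := by
      apply strictMonoOn_of_deriv_pos (convex_Icc _ _)
      · exact hf.continuousOn.mono (Icc_subset_Icc hx.1 hzb)
      · intro y hy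
        rw [interior_Icc] at hy
        obtain ⟨hyl, hyr⟩ := hy
        have hy1 : a < y := lt_of_le_of_lt hx.1 hyl
        have hy2 : y < b := lt_of_lt_of_le hyr hzb
        have hys : y ∈ s := ⟨hy1.le, hy2.le⟩
        have hnhds : s ∈ 𝓝 y := Icc_mem_nhds hy1 hy2
        have hdy : deriv f y = g y := (derivWithin_of_mem_nhds hnhds).symm
        have hdist : |y - x| < ε := by
          rw [abs_of_pos (by linarith : (0:ℝ) < y - x)]
          have h2 : δ ≤ ε / 2 := min_le_left _ _
          linarith
        have hk := key y hys (ne_of_gt hyl) hdist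
        have hyx : 0 < y - x := by linarith
        have : 0 < g y := by
          have hcc : 0 < c / 2 := by linarith
          calc (0:ℝ) < c / 2 * (y - x) := by positivity
          _ < g y / (y - x) * (y - x) := by
              apply mul_lt_mul_of_pos_right hk hyx
          _ = g y := div_mul_cancel₀ _ (by linarith)
        rw [hdy]; exact this
    have hlt : f x < f (x + δ) :=
      hmono ⟨le_refl x, by linarith⟩ ⟨by linarith, le_refl _⟩ (by linarith)
    have := hmax (x + δ) ⟨by linarith [hx.1], hzb⟩
    linarith
  · -- x = b : f decreasing to the left
    have hax : a < x := by rw [hxb]; exact hab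
    set δ := min (ε / 2) (x - a) with hδ
    have hδ0 : 0 < δ := lt_min (by linarith) (by linarith)
    have hza : a ≤ x - δ := by
      have := min_le_right (ε / 2) (x - a); simp only [hδ]; linarith
    have hmono : StrictAntiOn f (Icc (x - δ) x) := by
      apply strictAntiOn_of_deriv_neg (convex_Icc _ _)
      · exact hf.continuousOn.mono (Icc_subset_Icc hza hx.2)
      · intro y hy
        rw [interior_Icc] at hy
        obtain ⟨hyl, hyr⟩ := hy
        have hy1 : a < y := lt_of_le_of_lt hza hyl
        have hy2 : y < b := lt_of_lt_of_le hyr hx.2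
        have hys : y ∈ s := ⟨hy1.le, hy2.le⟩
        have hnhds : s ∈ 𝓝 y := Icc_mem_nhds hy1 hy2
        have hdy : deriv f y = g y := (derivWithin_of_mem_nhds hnhds).symm
        have hdist : |y - x| < ε := by
          rw [abs_of_neg (by linarith : y - x < 0)]
          have h2 : δ ≤ ε / 2 := min_le_left _ _
          linarith
        have hk := key y hys (ne_of_lt hyr) hdist
        have hyx : y - x < 0 := by linarith
        have : g y < 0 := by
          have h3 : g y / (y - x) * (y - x) < c / 2 * (y - x) :=
            mul_lt_mul_of_neg_right hk hyx
          have h4 : g y / (y - x) * (y - x) = g y := div_mul_cancel₀ _ (by linarith)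
          nlinarith
        rw [hdy]; exact this
    have hlt : f x < f (x - δ) :=
      hmono ⟨le_refl _, by linarith⟩ ⟨by linarith, le_refl x⟩ (by linarith)
    have := hmax (x - δ) ⟨hza, by linarith [hx.2]⟩
    linarith

/-- Combined radial facts at a max point with boundary sign conditions. -/
lemma radial_max_facts {a b x : ℝ} {f : ℝ → ℝ} (hab : a < b)
    (hf : ContDiffOn ℝ 2 f (Icc a b)) (hx : x ∈ Icc a b)
    (hmax : ∀ y ∈ Icc a b, f y ≤ f x)
    (hBCa : x = a → 0 ≤ derivWithin f (Icc a b) x)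
    (hBCb : x = b → derivWithin f (Icc a b) x ≤ 0) :
    derivWithin f (Icc a b) x = 0 ∧
      derivWithin (derivWithin f (Icc a b)) (Icc a b) x ≤ 0 := by
  have hfd : DifferentiableWithinAt ℝ f (Icc a b) x :=
    hf.differentiableOn (by norm_num) x hx
  have hle : derivWithin f (Icc a b) x ≤ 0 := by
    rcases lt_or_eq_of_le hx.2 with h | h
    · exact derivWithin_nonpos_of_isMaxOn hx h hfd hmax
    · exact hBCb h
  have hge : 0 ≤ derivWithin f (Icc a b) x := by
    rcases lt_or_eq_of_le hx.1 with h | h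
    · exact derivWithin_nonneg_of_isMaxOn hx h hfd hmax
    · exact hBCa h.symm
  have h0 : derivWithin f (Icc a b) x = 0 := le_antisymm hle hge
  exact ⟨h0, derivWithin2_nonpos_of_isMaxOn hab hf hx hmax h0⟩

/-- Second-derivative test for a global max of a `C²` function on `ℝ`. -/
lemma deriv2_nonpos_of_max {g : ℝ → ℝ} {x : ℝ} (hg : ContDiff ℝ 2 g)
    (hmax : ∀ y, g y ≤ g x) : deriv (deriv g) x ≤ 0 := by
  have hloc : IsLocalMax g x := Filter.Eventually.of_forall hmax
  have hd0 : deriv g x = 0 := hloc.deriv_eq_zero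
  by_contra hcpos
  push_neg at hcpos
  set c := deriv (deriv g) x with hc
  have hg1 : ContDiff ℝ 1 (deriv g) := (contDiff_succ_iff_deriv.mp (show ContDiff ℝ (1+1) g by exact_mod_cast hg)).2.2
  have hgd : DifferentiableAt ℝ (deriv g) x := hg1.differentiable one_ne_zero x
  have h := hgd.hasDerivAt
  rw [hasDerivAt_iff_tendsto_slope] at h
  have hev : ∀ᶠ y in 𝓝[≠] x, c / 2 < slope (deriv g) x y :=
    h.eventually (eventually_gt_nhds (by linarith))
  rw [Filter.Eventually, Metric.mem_nhdsWithin_iff] at hev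
  obtain ⟨ε, hε, hball⟩ := hev
  set z := x + ε / 2 with hz
  have hmono : StrictMonoOn g (Icc x z) := by
    apply strictMonoOn_of_deriv_pos (convex_Icc _ _) hg.continuous.continuousOn
    intro y hy
    rw [interior_Icc] at hy
    obtain ⟨hyl, hyr⟩ := hy
    have hmem : y ∈ Metric.ball x ε ∩ ({x}ᶜ : Set ℝ) := by
      constructor
      · rw [Metric.mem_ball, Real.dist_eq, abs_of_pos (by linarith : (0:ℝ) < y - x)]
        simp only [hz] at hyr; linarith
      · exact ne_of_gt hyl
    have h5 := hball hmem
    simp only [Set.mem_setOf_eq, slope_def_field, hd0, sub_zero] at h5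
    have hyx : 0 < y - x := by linarith
    have : 0 < deriv g y := by
      have := mul_lt_mul_of_pos_right h5 hyx
      rw [div_mul_cancel₀ _ (by linarith : y - x ≠ 0)] at this
      nlinarith
    exact this
  have hlt : g x < g z :=
    hmono ⟨le_refl x, by simp only [hz]; linarith⟩ ⟨by simp only [hz]; linarith, le_refl z⟩
      (by simp only [hz]; linarith)
  linarith [hmax z]

/-- Radial slice of an `fderivWithin` on the product set. -/
lemma slice_radial {a b : ℝ} (hab : a < b) {Φ : ℝ × ℝ → ℝ}
    (hΦ : DifferentiableOn ℝ Φ (Icc a b ×ˢ (univ : Set ℝ))) {ρ : ℝ} (φ : ℝ)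
    (hρ : ρ ∈ Icc a b) :
    derivWithin (fun t => Φ (t, φ)) (Icc a b) ρ =
      fderivWithin ℝ Φ (Icc a b ×ˢ (univ : Set ℝ)) (ρ, φ) (1, 0) := by
  have hmem : (ρ, φ) ∈ Icc a b ×ˢ (univ : Set ℝ) := ⟨hρ, mem_univ _⟩
  have hF := (hΦ _ hmem).hasFDerivWithinAt
  have hι : HasDerivWithinAt (fun t : ℝ => (t, φ)) ((1:ℝ), (0:ℝ)) (Icc a b) ρ :=
    (HasDerivAt.prodMk (hasDerivAt_id ρ) (hasDerivAt_const ρ φ)).hasDerivWithinAt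
  have hst : MapsTo (fun t : ℝ => (t, φ)) (Icc a b) (Icc a b ×ˢ (univ : Set ℝ)) :=
    fun t ht => ⟨ht, mem_univ _⟩
  have hcomp := hF.comp_hasDerivWithinAt ρ hι hst
  exact hcomp.derivWithin (uniqueDiffOn_Icc hab ρ hρ)

/-- Angular slice of an `fderivWithin` on the product set. -/
lemma slice_angular {a b : ℝ} {Φ : ℝ × ℝ → ℝ}
    (hΦ : DifferentiableOn ℝ Φ (Icc a b ×ˢ (univ : Set ℝ))) {ρ : ℝ} (φ : ℝ)
    (hρ : ρ ∈ Icc a b) :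
    deriv (fun t => Φ (ρ, t)) φ =
      fderivWithin ℝ Φ (Icc a b ×ˢ (univ : Set ℝ)) (ρ, φ) (0, 1) := by
  have hmem : (ρ, φ) ∈ Icc a b ×ˢ (univ : Set ℝ) := ⟨hρ, mem_univ _⟩
  have hF := (hΦ _ hmem).hasFDerivWithinAt
  have hι : HasDerivWithinAt (fun t : ℝ => (ρ, t)) ((0:ℝ), (1:ℝ)) (univ : Set ℝ) φ :=
    (HasDerivAt.prodMk (hasDerivAt_const φ ρ) (hasDerivAt_id φ)).hasDerivWithinAt
  have hst : MapsTo (fun t : ℝ => (ρ, t)) (univ : Set ℝ) (Icc a b ×ˢ (univ : Set ℝ)) :=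
    fun t _ => ⟨hρ, mem_univ _⟩
  have hcomp := hF.comp_hasDerivWithinAt φ hι hst
  rw [hasDerivWithinAt_univ] at hcomp
  exact hcomp.deriv

/-- Joint continuity of the three partial-derivative fields. -/
lemma pd_continuousOn {a b : ℝ} (hab : a < b) {u : ℝ → ℝ → ℝ}
    (hu : ContDiffOn ℝ 2 (fun p : ℝ × ℝ => u p.1 p.2) (Icc a b ×ˢ (univ : Set ℝ))) :
    ContinuousOn (fun p : ℝ × ℝ => pdR a b u p.1 p.2) (Icc a b ×ˢ (univ : Set ℝ)) ∧
    ContinuousOn (fun p : ℝ × ℝ => pdRR a b u p.1 p.2) (Icc a b ×ˢ (univ : Set ℝ)) ∧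
    ContinuousOn (fun p : ℝ × ℝ => pdPP u p.1 p.2) (Icc a b ×ˢ (univ : Set ℝ)) := by
  set s := Icc a b ×ˢ (univ : Set ℝ) with hsdef
  have hus : UniqueDiffOn ℝ s := (uniqueDiffOn_Icc hab).prod uniqueDiffOn_univ
  set F : ℝ × ℝ → ℝ := fun p => u p.1 p.2 with hF
  have hG1 : ContDiffOn ℝ 1 (fderivWithin ℝ F s) s := hu.fderivWithin hus (by norm_num)
  set H1 : ℝ × ℝ → ℝ := fun p => fderivWithin ℝ F s p (1, 0) with hH1def
  set H2 : ℝ × ℝ → ℝ := fun p => fderivWithin ℝ F s p (0, 1) with hH2def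
  have hH1 : ContDiffOn ℝ 1 H1 s := hG1.clm_apply contDiffOn_const
  have hH2 : ContDiffOn ℝ 1 H2 s := hG1.clm_apply contDiffOn_const
  have e1 : ∀ p ∈ s, pdR a b u p.1 p.2 = H1 p := by
    rintro ⟨ρ, φ⟩ ⟨hρ, -⟩
    exact slice_radial hab (hu.differentiableOn (by norm_num)) φ hρ
  have e3 : ∀ ρ ∈ Icc a b, ∀ φ : ℝ, deriv (u ρ) φ = H2 (ρ, φ) := by
    intro ρ hρ φ
    exact slice_angular (hu.differentiableOn (by norm_num)) φ hρ
  have e2 : ∀ p ∈ s, pdRR a b u p.1 p.2 = fderivWithin ℝ H1 s p (1, 0) := by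
    rintro ⟨ρ, φ⟩ ⟨hρ, -⟩
    have hcongr : derivWithin (fun t => pdR a b u t φ) (Icc a b) ρ =
        derivWithin (fun t => H1 (t, φ)) (Icc a b) ρ := by
      apply derivWithin_congr
      · intro t ht; exact e1 (t, φ) ⟨ht, mem_univ _⟩
      · exact e1 (ρ, φ) ⟨hρ, mem_univ _⟩
    show derivWithin (fun t => pdR a b u t φ) (Icc a b) ρ = _
    rw [hcongr]
    exact slice_radial hab (hH1.differentiableOn one_ne_zero) φ hρ
  have e4 : ∀ p ∈ s, pdPP u p.1 p.2 = fderivWithin ℝ H2 s p (0, 1) := by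
    rintro ⟨ρ, φ⟩ ⟨hρ, -⟩
    have hcongr : deriv (deriv (u ρ)) φ = deriv (fun t => H2 (ρ, t)) φ := by
      congr 1
      funext t
      exact e3 ρ hρ t
    show deriv (deriv (u ρ)) φ = _
    rw [hcongr]
    exact slice_angular (hH2.differentiableOn one_ne_zero) φ hρ
  have hcH1' : ContinuousOn (fderivWithin ℝ H1 s) s :=
    hH1.continuousOn_fderivWithin hus le_rfl
  have hcH2' : ContinuousOn (fderivWithin ℝ H2 s) s :=
    hH2.continuousOn_fderivWithin hus le_rfl
  refine ⟨?_, ?_, ?_⟩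
  · exact (hH1.continuousOn).congr (fun p hp => e1 p hp)
  · exact (hcH1'.clm_apply continuousOn_const).congr (fun p hp => e2 p hp)
  · exact (hcH2'.clm_apply continuousOn_const).congr (fun p hp => e4 p hp)

/-- Periodicity of the derivative fields. -/
lemma pd_periodic {a b : ℝ} {u : ℝ → ℝ → ℝ}
    (hper : ∀ ρ φ, u ρ (φ + 2 * Real.pi) = u ρ φ) (ρ φ : ℝ) :
    pdR a b u ρ (φ + 2 * Real.pi) = pdR a b u ρ φ ∧
    pdRR a b u ρ (φ + 2 * Real.pi) = pdRR a b u ρ φ ∧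
    pdPP u ρ (φ + 2 * Real.pi) = pdPP u ρ φ := by
  have h1 : ∀ ρ' : ℝ, pdR a b u ρ' (φ + 2 * Real.pi) = pdR a b u ρ' φ := by
    intro ρ'
    unfold pdR
    congr 1
    funext t
    exact hper t φ
  refine ⟨h1 ρ, ?_, ?_⟩
  · unfold pdRR
    congr 1
    funext t
    exact h1 t
  · unfold pdPP
    have hd : ∀ g : ℝ → ℝ, (∀ x, g (x + 2 * Real.pi) = g x) →
        ∀ x, deriv g (x + 2 * Real.pi) = deriv g x := by
      intro g hg x
      rw [← deriv_comp_add_const]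
      congr 1
      funext y
      exact hg y
    exact hd (deriv (u ρ)) (fun x => hd (u ρ) (hper ρ) x) φ

/-- Negation of the derivative fields. -/
lemma pd_neg {a b : ℝ} (hab : a < b) {u : ℝ → ℝ → ℝ} {ρ : ℝ} (hρ : ρ ∈ Icc a b) (φ : ℝ) :
    pdR a b (fun x y => -u x y) ρ φ = -pdR a b u ρ φ ∧
    pdRR a b (fun x y => -u x y) ρ φ = -pdRR a b u ρ φ ∧
    pdPP (fun x y => -u x y) ρ φ = -pdPP u ρ φ := by
  have h1 : ∀ ρ' ∈ Icc a b, pdR a b (fun x y => -u x y) ρ' φ = -pdR a b u ρ' φ := by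
    intro ρ' hρ'
    unfold pdR
    exact derivWithin.neg
  refine ⟨h1 ρ hρ, ?_, ?_⟩
  · unfold pdRR
    have : derivWithin (fun s => pdR a b (fun x y => -u x y) s φ) (Icc a b) ρ =
        derivWithin (fun s => -pdR a b u s φ) (Icc a b) ρ := by
      apply derivWithin_congr
      · intro t ht; exact h1 t ht
      · exact h1 ρ hρ
    rw [this]
    exact derivWithin.neg
  · unfold pdPP
    have : deriv (fun y => -u ρ y) = fun y => -deriv (u ρ) y := by
      funext y; exact deriv.neg
    rw [show (fun x y => -u x y) ρ = fun y => -u ρ y from rfl, this]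
    exact deriv.neg

/-- Pointwise estimate at an interior/boundary maximum for one piece. -/
lemma onepiece {a b cc lam M : ℝ} (hab : a < b) (ha : 0 < a) (hcc : 0 < cc)
    (hlam : 0 < lam) {u : ℝ → ℝ → ℝ}
    (hu : ContDiffOn ℝ 2 (fun p : ℝ × ℝ => u p.1 p.2) (Icc a b ×ˢ (univ : Set ℝ)))
    {ρ₀ φ₀ : ℝ} (hρ : ρ₀ ∈ Icc a b) (hM : u ρ₀ φ₀ = M)
    (hmax : ∀ ρ ∈ Icc a b, ∀ φ, u ρ φ ≤ M)
    (hBCa : ρ₀ = a → 0 ≤ pdR a b u ρ₀ φ₀)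
    (hBCb : ρ₀ = b → pdR a b u ρ₀ φ₀ ≤ 0) :
    lam * M ≤ lam * u ρ₀ φ₀ -
      cc * (pdRR a b u ρ₀ φ₀ + ρ₀⁻¹ * pdR a b u ρ₀ φ₀ + (ρ₀ ^ 2)⁻¹ * pdPP u ρ₀ φ₀) := by
  have hρ0 : 0 < ρ₀ := lt_of_lt_of_le ha hρ.1
  -- radial slice
  set f : ℝ → ℝ := fun s => u s φ₀ with hfdef
  have hf : ContDiffOn ℝ 2 f (Icc a b) := by
    have hι : ContDiffOn ℝ 2 (fun s : ℝ => (s, φ₀)) (Icc a b) :=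
      (contDiff_id.prodMk contDiff_const).contDiffOn
    exact hu.comp hι (fun t ht => ⟨ht, mem_univ _⟩)
  have hmaxf : ∀ y ∈ Icc a b, f y ≤ f ρ₀ := by
    intro y hy
    rw [hfdef]
    simp only
    rw [hM]
    exact hmax y hy φ₀
  have hradial := radial_max_facts hab hf hρ hmaxf hBCa hBCb
  -- angular slice
  have hg : ContDiff ℝ 2 (u ρ₀) := by
    have hι : ContDiffOn ℝ 2 (fun t : ℝ => (ρ₀, t)) (univ : Set ℝ) :=
      (contDiff_const.prodMk contDiff_id).contDiffOn
    have := hu.comp hι (fun t _ => ⟨hρ, mem_univ _⟩)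
    rw [contDiffOn_univ] at this
    exact this
  have hmaxg : ∀ y, u ρ₀ y ≤ u ρ₀ φ₀ := by
    intro y
    rw [hM]
    exact hmax ρ₀ hρ y
  have hang : pdPP u ρ₀ φ₀ ≤ 0 := deriv2_nonpos_of_max hg hmaxg
  have hd1 : pdR a b u ρ₀ φ₀ = 0 := hradial.1
  have hd2 : pdRR a b u ρ₀ φ₀ ≤ 0 := hradial.2
  have hinv : (0:ℝ) < (ρ₀ ^ 2)⁻¹ := by positivity
  have : cc * (pdRR a b u ρ₀ φ₀ + ρ₀⁻¹ * pdR a b u ρ₀ φ₀ + (ρ₀ ^ 2)⁻¹ * pdPP u ρ₀ φ₀) ≤ 0 := by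
    rw [hd1]
    have h2 : (ρ₀ ^ 2)⁻¹ * pdPP u ρ₀ φ₀ ≤ 0 := mul_nonpos_of_nonneg_of_nonpos hinv.le hang
    nlinarith
  rw [hM]
  linarith

/-- The image of `|λu - 𝒜u|` over a periodic strip is bounded above. -/
lemma piece_bdd {a b cc lam : ℝ} (hab : a < b) (ha : 0 < a) {u : ℝ → ℝ → ℝ}
    (hu : ContDiffOn ℝ 2 (fun p : ℝ × ℝ => u p.1 p.2) (Icc a b ×ˢ (univ : Set ℝ)))
    (hper : ∀ ρ φ, u ρ (φ + 2 * Real.pi) = u ρ φ) :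
    BddAbove ((fun p : ℝ × ℝ =>
        |lam * u p.1 p.2 - cc * (pdRR a b u p.1 p.2 + (p.1)⁻¹ * pdR a b u p.1 p.2
          + (p.1 ^ 2)⁻¹ * pdPP u p.1 p.2)|) '' (Icc a b ×ˢ (univ : Set ℝ))) := by
  have hπ : (0:ℝ) < 2 * Real.pi := by positivity
  set Z : ℝ × ℝ → ℝ := fun p =>
    |lam * u p.1 p.2 - cc * (pdRR a b u p.1 p.2 + (p.1)⁻¹ * pdR a b u p.1 p.2
      + (p.1 ^ 2)⁻¹ * pdPP u p.1 p.2)| with hZ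
  have hcont : ContinuousOn Z (Icc a b ×ˢ (univ : Set ℝ)) := by
    obtain ⟨c1, c2, c3⟩ := pd_continuousOn hab hu
    have hne : ∀ p : ℝ × ℝ, p ∈ Icc a b ×ˢ (univ : Set ℝ) → p.1 ≠ 0 :=
      fun p hp => ne_of_gt (lt_of_lt_of_le ha hp.1.1)
    have hinv : ContinuousOn (fun p : ℝ × ℝ => (p.1)⁻¹) (Icc a b ×ˢ (univ : Set ℝ)) :=
      continuous_fst.continuousOn.inv₀ hne
    have hinv2 : ContinuousOn (fun p : ℝ × ℝ => (p.1 ^ 2)⁻¹) (Icc a b ×ˢ (univ : Set ℝ)) :=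
      ((continuous_fst.pow 2).continuousOn).inv₀ (fun p hp => pow_ne_zero 2 (hne p hp))
    exact ((continuousOn_const.mul hu.continuousOn).sub
      (continuousOn_const.mul ((c2.add (hinv.mul c1)).add (hinv2.mul c3)))).abs
  have hK : IsCompact (Icc a b ×ˢ Icc 0 (2 * Real.pi)) := isCompact_Icc.prod isCompact_Icc
  have hsub : Icc a b ×ˢ Icc 0 (2 * Real.pi) ⊆ Icc a b ×ˢ (univ : Set ℝ) :=
    fun p hp => ⟨hp.1, mem_univ _⟩
  obtain ⟨q, hq, hqmax⟩ := hK.exists_isMaxOn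
    ⟨(a, 0), ⟨le_refl a, hab.le⟩, le_refl 0, hπ.le⟩ (hcont.mono hsub)
  refine ⟨Z q, ?_⟩
  rintro v ⟨p, hp, rfl⟩
  have hperZ : Function.Periodic (fun φ => Z (p.1, φ)) (2 * Real.pi) := by
    intro φ
    obtain ⟨e1, e2, e3⟩ := pd_periodic (a := a) (b := b) hper p.1 φ
    simp only [hZ, hper, e1, e2, e3]
  obtain ⟨ψ, hψ, he⟩ := hperZ.exists_mem_Ico₀ hπ p.2
  have : Z p = Z (p.1, ψ) := by rw [← he]
  rw [this]
  exact hqmax (⟨hp.1, hψ.1, hψ.2.le⟩ : (p.1, ψ) ∈ Icc a b ×ˢ Icc 0 (2 * Real.pi))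

/-- The sup of `|u|` over a periodic strip is attained. -/
lemma piece_sup {a b : ℝ} (hab : a < b) {u : ℝ → ℝ → ℝ}
    (hu : ContDiffOn ℝ 2 (fun p : ℝ × ℝ => u p.1 p.2) (Icc a b ×ˢ (univ : Set ℝ)))
    (hper : ∀ ρ φ, u ρ (φ + 2 * Real.pi) = u ρ φ) :
    ∃ p : ℝ × ℝ, p.1 ∈ Icc a b ∧ (∀ ρ ∈ Icc a b, ∀ φ, |u ρ φ| ≤ |u p.1 p.2|) ∧
      sSup ((fun q : ℝ × ℝ => |u q.1 q.2|) '' (Icc a b ×ˢ (univ : Set ℝ))) = |u p.1 p.2| := by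
  have hπ : (0:ℝ) < 2 * Real.pi := by positivity
  have hK : IsCompact (Icc a b ×ˢ Icc 0 (2 * Real.pi)) := isCompact_Icc.prod isCompact_Icc
  have hsub : Icc a b ×ˢ Icc 0 (2 * Real.pi) ⊆ Icc a b ×ˢ (univ : Set ℝ) :=
    fun p hp => ⟨hp.1, mem_univ _⟩
  obtain ⟨q, hq, hqmax⟩ := hK.exists_isMaxOn
    ⟨(a, 0), ⟨le_refl a, hab.le⟩, le_refl 0, hπ.le⟩
    ((hu.continuousOn.mono hsub).abs :
      ContinuousOn (fun p : ℝ × ℝ => |u p.1 p.2|) (Icc a b ×ˢ Icc 0 (2 * Real.pi)))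
  have hbound : ∀ ρ ∈ Icc a b, ∀ φ, |u ρ φ| ≤ |u q.1 q.2| := by
    intro ρ hρ φ
    obtain ⟨ψ, hψ, he⟩ := Function.Periodic.exists_mem_Ico₀ (hper ρ) hπ φ
    have h1 : |u ρ φ| = |u ρ ψ| := by rw [he]
    rw [h1]
    exact hqmax (⟨hρ, hψ.1, hψ.2.le⟩ : (ρ, ψ) ∈ Icc a b ×ˢ Icc 0 (2 * Real.pi))
  refine ⟨q, hq.1, hbound, ?_⟩
  apply IsGreatest.csSup_eq
  constructor
  · exact ⟨q, ⟨hq.1, mem_univ _⟩, rfl⟩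
  · rintro v ⟨p, hp, rfl⟩
    exact hbound p.1 hp.1 p.2

/-- Estimate at a global max of `|u|` for one piece, handling both signs. -/
lemma piece_est {a b cc lam M : ℝ} (hab : a < b) (ha : 0 < a) (hcc : 0 < cc)
    (hlam : 0 < lam) {u : ℝ → ℝ → ℝ}
    (hu : ContDiffOn ℝ 2 (fun p : ℝ × ℝ => u p.1 p.2) (Icc a b ×ˢ (univ : Set ℝ)))
    {p : ℝ × ℝ} (hp : p.1 ∈ Icc a b)
    (habs : |u p.1 p.2| = M) (hmax : ∀ ρ ∈ Icc a b, ∀ φ, |u ρ φ| ≤ M)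
    (hBCa : p.1 = a → (u p.1 p.2 = M → 0 ≤ pdR a b u p.1 p.2) ∧
      (u p.1 p.2 = -M → pdR a b u p.1 p.2 ≤ 0))
    (hBCb : p.1 = b → (u p.1 p.2 = M → pdR a b u p.1 p.2 ≤ 0) ∧
      (u p.1 p.2 = -M → 0 ≤ pdR a b u p.1 p.2)) :
    lam * M ≤ |lam * u p.1 p.2 - cc * (pdRR a b u p.1 p.2 + (p.1)⁻¹ * pdR a b u p.1 p.2
      + (p.1 ^ 2)⁻¹ * pdPP u p.1 p.2)| := by
  rcases le_or_gt 0 (u p.1 p.2) with hsgn | hsgn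
  · have hval : u p.1 p.2 = M := by rw [← habs, abs_of_nonneg hsgn]
    have hmaxu : ∀ ρ ∈ Icc a b, ∀ φ, u ρ φ ≤ M :=
      fun ρ hρ φ => le_trans (le_abs_self _) (hmax ρ hρ φ)
    have h1 := onepiece hab ha hcc hlam hu hp hval hmaxu
      (fun h => (hBCa h).1 hval) (fun h => (hBCb h).1 hval)
    exact le_trans h1 (le_abs_self _)
  · have hval : u p.1 p.2 = -M := by
      have : |u p.1 p.2| = -(u p.1 p.2) := abs_of_neg hsgn
      linarith [habs, this]
    obtain ⟨e1, e2, e3⟩ := pd_neg hab hp p.2 (u := u)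
    have hu' : ContDiffOn ℝ 2 (fun q : ℝ × ℝ => (fun x y => -u x y) q.1 q.2)
        (Icc a b ×ˢ (univ : Set ℝ)) := hu.neg
    have hval' : (fun x y => -u x y) p.1 p.2 = M := by simp [hval]
    have hmax' : ∀ ρ ∈ Icc a b, ∀ φ, (fun x y => -u x y) ρ φ ≤ M :=
      fun ρ hρ φ => le_trans (neg_le_abs _) (hmax ρ hρ φ)
    have hBCa' : p.1 = a → 0 ≤ pdR a b (fun x y => -u x y) p.1 p.2 := by
      intro h
      rw [e1]
      have := (hBCa h).2 hval
      linarith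
    have hBCb' : p.1 = b → pdR a b (fun x y => -u x y) p.1 p.2 ≤ 0 := by
      intro h
      rw [e1]
      have := (hBCb h).2 hval
      linarith
    have h1 := onepiece hab ha hcc hlam hu' hp hval' hmax' hBCa' hBCb'
    have h2 : lam * ((fun x y => -u x y) p.1 p.2) -
        cc * (pdRR a b (fun x y => -u x y) p.1 p.2
          + (p.1)⁻¹ * pdR a b (fun x y => -u x y) p.1 p.2
          + (p.1 ^ 2)⁻¹ * pdPP (fun x y => -u x y) p.1 p.2) =
        -(lam * u p.1 p.2 - cc * (pdRR a b u p.1 p.2 + (p.1)⁻¹ * pdR a b u p.1 p.2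
          + (p.1 ^ 2)⁻¹ * pdPP u p.1 p.2)) := by
      rw [e1, e2, e3]
      ring
    rw [h2] at h1
    exact le_trans h1 (neg_le_abs _)

/-- Dissipativity estimate `‖λu − 𝒜u‖ ≥ λ‖u‖`. -/
theorem dissipativity_transmission_2D
    (r R κ α β lam : ℝ) (hr : 0 < r) (hr1 : r < 1) (hR : 1 < R) (hκ : 0 < κ)
    (hα : 0 ≤ α) (hβ : 0 ≤ β) (hlam : 0 < lam)
    (um up : ℝ → ℝ → ℝ)
    (hum : ContDiffOn ℝ 2 (fun p : ℝ × ℝ => um p.1 p.2) (Icc r 1 ×ˢ (univ : Set ℝ)))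
    (hup : ContDiffOn ℝ 2 (fun p : ℝ × ℝ => up p.1 p.2) (Icc 1 R ×ˢ (univ : Set ℝ)))
    (humper : ∀ ρ φ, um ρ (φ + 2 * Real.pi) = um ρ φ)
    (hupper : ∀ ρ φ, up ρ (φ + 2 * Real.pi) = up ρ φ)
    (hbcm : ∀ φ : ℝ, pdR r 1 um r φ = 0)
    (hbcp : ∀ φ : ℝ, pdR 1 R up R φ = 0)
    (htrp : ∀ φ : ℝ, pdR 1 R up 1 φ = α * (up 1 φ - um 1 φ))
    (htrm : ∀ φ : ℝ, pdR r 1 um 1 φ = β * (up 1 φ - um 1 φ)) :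
    lam * max
        (sSup ((fun p : ℝ × ℝ => |um p.1 p.2|) '' (Icc r 1 ×ˢ (univ : Set ℝ))))
        (sSup ((fun p : ℝ × ℝ => |up p.1 p.2|) '' (Icc 1 R ×ˢ (univ : Set ℝ))))
      ≤ max
        (sSup ((fun p : ℝ × ℝ =>
            |lam * um p.1 p.2 -
              κ * (pdRR r 1 um p.1 p.2 + (p.1)⁻¹ * pdR r 1 um p.1 p.2
                    + (p.1 ^ 2)⁻¹ * pdPP um p.1 p.2)|)
          '' (Icc r 1 ×ˢ (univ : Set ℝ))))
        (sSup ((fun p : ℝ × ℝ =>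
            |lam * up p.1 p.2 -
              (pdRR 1 R up p.1 p.2 + (p.1)⁻¹ * pdR 1 R up p.1 p.2
                + (p.1 ^ 2)⁻¹ * pdPP up p.1 p.2)|)
          '' (Icc 1 R ×ˢ (univ : Set ℝ)))) := by
  have hone : (fun p : ℝ × ℝ =>
      |lam * up p.1 p.2 -
        (pdRR 1 R up p.1 p.2 + (p.1)⁻¹ * pdR 1 R up p.1 p.2
          + (p.1 ^ 2)⁻¹ * pdPP up p.1 p.2)|) = (fun p : ℝ × ℝ =>
      |lam * up p.1 p.2 -
        1 * (pdRR 1 R up p.1 p.2 + (p.1)⁻¹ * pdR 1 R up p.1 p.2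
          + (p.1 ^ 2)⁻¹ * pdPP up p.1 p.2)|) := by
    funext p; rw [one_mul]
  rw [hone]
  obtain ⟨pm, hpm, humV, hSm⟩ := piece_sup hr1 hum humper
  obtain ⟨pp, hpp, hupW, hSp⟩ := piece_sup hR hup hupper
  rw [hSm, hSp]
  set V := |um pm.1 pm.2| with hV
  set W := |up pp.1 pp.2| with hW
  set M := max V W with hM
  have hmem1r : (1:ℝ) ∈ Icc r 1 := ⟨hr1.le, le_refl 1⟩
  have hmem1R : (1:ℝ) ∈ Icc 1 R := ⟨le_refl 1, hR.le⟩
  have hbm : BddAbove _ := piece_bdd (cc := κ) (lam := lam) hr1 hr hum humper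
  have hbp : BddAbove _ := piece_bdd (cc := (1:ℝ)) (lam := lam) hR one_pos hup hupper
  rcases le_total W V with hVW | hVW
  · -- max on the inner piece
    have habs : |um pm.1 pm.2| = M := (max_eq_left hVW).symm
    have hmaxm : ∀ ρ ∈ Icc r 1, ∀ φ, |um ρ φ| ≤ M :=
      fun ρ hρ φ => le_trans (humV ρ hρ φ) (le_max_left _ _)
    have hup_le : ∀ φ, |up 1 φ| ≤ M :=
      fun φ => le_trans (hupW 1 hmem1R φ) (le_max_right _ _)
    have hest := piece_est hr1 hr hκ hlam hum hpm habs hmaxm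
      (fun h => by
        have h1 : pdR r 1 um pm.1 pm.2 = 0 := by rw [h, hbcm pm.2]
        rw [h1]
        exact ⟨fun _ => le_refl 0, fun _ => le_refl 0⟩)
      (fun h => by
        have h1 : pdR r 1 um pm.1 pm.2 = β * (up 1 pm.2 - um 1 pm.2) := by
          rw [h, htrm pm.2]
        have h2 : up 1 pm.2 ≤ M := le_trans (le_abs_self _) (hup_le pm.2)
        have h3 : -M ≤ up 1 pm.2 := le_trans (neg_le_neg (hup_le pm.2)) (neg_abs_le _)
        constructor
        · intro hv
          rw [h] at hv
          rw [h1]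
          exact mul_nonpos_of_nonneg_of_nonpos hβ (by linarith)
        · intro hv
          rw [h] at hv
          rw [h1]
          exact mul_nonneg hβ (by linarith))
    calc lam * M ≤ _ := hest
      _ ≤ _ := le_csSup hbm ⟨pm, Set.mem_prod.mpr ⟨hpm, mem_univ _⟩, rfl⟩
      _ ≤ _ := le_max_left _ _
  · -- max on the outer piece
    have habs : |up pp.1 pp.2| = M := (max_eq_right hVW).symm
    have hmaxp : ∀ ρ ∈ Icc 1 R, ∀ φ, |up ρ φ| ≤ M :=
      fun ρ hρ φ => le_trans (hupW ρ hρ φ) (le_max_right _ _)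
    have hum_le : ∀ φ, |um 1 φ| ≤ M :=
      fun φ => le_trans (humV 1 hmem1r φ) (le_max_left _ _)
    have hest := piece_est hR one_pos one_pos hlam hup hpp habs hmaxp
      (fun h => by
        have h1 : pdR 1 R up pp.1 pp.2 = α * (up 1 pp.2 - um 1 pp.2) := by
          rw [h, htrp pp.2]
        have h2 : um 1 pp.2 ≤ M := le_trans (le_abs_self _) (hum_le pp.2)
        have h3 : -M ≤ um 1 pp.2 := le_trans (neg_le_neg (hum_le pp.2)) (neg_abs_le _)
        constructor
        · intro hv
          rw [h] at hv
          rw [h1]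
          exact mul_nonneg hα (by linarith)
        · intro hv
          rw [h] at hv
          rw [h1]
          exact mul_nonpos_of_nonneg_of_nonpos hα (by linarith))
      (fun h => by
        have h1 : pdR 1 R up pp.1 pp.2 = 0 := by rw [h, hbcp pp.2]
        rw [h1]
        exact ⟨fun _ => le_refl 0, fun _ => le_refl 0⟩)
    calc lam * M ≤ _ := hest
      _ ≤ _ := le_csSup hbp ⟨pp, Set.mem_prod.mpr ⟨hpp, mem_univ _⟩, rfl⟩
      _ ≤ _ := le_max_right _ _
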